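/- Let A be a complex normed algebra (with a continuous trilinear-type product bounded by the product of norms), B a complex normed space with a ternary product [·,·,·] satisfying ‖[a,b,c]‖ ≤ ‖a‖‖b‖‖c‖, and let f : A → B be ℝ-linear. Suppose p > 1 and θ ≥ 0 are such that ‖f([x₁,x₂,x₃]) - [f(x₁),f(x₂),f(x₃)]‖ ≤ θ(‖x₁‖^{3p} + ‖x₂‖^{3p} + ‖x₃‖^{3p}) for all x₁,x₂,x₃ ∈ A, and that the ternary products on A and B are homogeneous of degree 1 in each variable for real scalars. Then f([x₁,x₂,x₃]) = [f(x₁),f(x₂),f(x₃)] for all x₁,x₂,x₃. -/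

import Mathlib

theorem stmt_6 {A B : Type*} [NormedAddCommGroup A] [NormedSpace ℂ A]
    [NormedAddCommGroup B] [NormedSpace ℂ B]
    (TA : A → A → A → A) (TB : B → B → B → B)
    (hTAbound : ∀ a b c : A, ‖TA a b c‖ ≤ ‖a‖ * ‖b‖ * ‖c‖)
    (hTBbound : ∀ a b c : B, ‖TB a b c‖ ≤ ‖a‖ * ‖b‖ * ‖c‖)
    (hTA1 : ∀ (r : ℝ) (a b c : A), TA (r • a) b c = r • TA a b c)
    (hTA2 : ∀ (r : ℝ) (a b c : A), TA a (r • b) c = r • TA a b c)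
    (hTA3 : ∀ (r : ℝ) (a b c : A), TA a b (r • c) = r • TA a b c)
    (hTB1 : ∀ (r : ℝ) (a b c : B), TB (r • a) b c = r • TB a b c)
    (hTB2 : ∀ (r : ℝ) (a b c : B), TB a (r • b) c = r • TB a b c)
    (hTB3 : ∀ (r : ℝ) (a b c : B), TB a b (r • c) = r • TB a b c)
    (f : A → B) (hf : IsLinearMap ℝ f)
    (p θ : ℝ) (hp : 1 < p) (hθ : 0 ≤ θ)
    (h : ∀ x₁ x₂ x₃ : A,
      ‖f (TA x₁ x₂ x₃) - TB (f x₁) (f x₂) (f x₃)‖ ≤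
        θ * (‖x₁‖ ^ (3 * p) + ‖x₂‖ ^ (3 * p) + ‖x₃‖ ^ (3 * p))) :
    ∀ x₁ x₂ x₃ : A, f (TA x₁ x₂ x₃) = TB (f x₁) (f x₂) (f x₃) := by
  intro x₁ x₂ x₃
  set D : ℝ := ‖f (TA x₁ x₂ x₃) - TB (f x₁) (f x₂) (f x₃)‖ with hD
  set S : ℝ := ‖x₁‖ ^ (3 * p) + ‖x₂‖ ^ (3 * p) + ‖x₃‖ ^ (3 * p) with hS
  set r : ℝ := ((1 : ℝ) / 2) ^ (3 * p - 3) with hr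
  have hr0 : 0 ≤ r := Real.rpow_nonneg (by norm_num) _
  have hr1 : r < 1 := Real.rpow_lt_one (by norm_num) (by norm_num) (by linarith)
  have key : ∀ n : ℕ, D ≤ θ * S * r ^ n := by
    intro n
    set c : ℝ := ((1 : ℝ) / 2) ^ (n : ℝ) with hc
    have hc0 : 0 < c := Real.rpow_pos_of_pos (by norm_num) _
    have hnx : ∀ x : A, ‖c • x‖ = c * ‖x‖ := by
      intro x
      rw [norm_smul, Real.norm_of_nonneg hc0.le]
    have hrp : ∀ x : A, ‖c • x‖ ^ (3 * p) = c ^ (3 * p) * ‖x‖ ^ (3 * p) := by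
      intro x
      rw [hnx, Real.mul_rpow hc0.le (norm_nonneg x)]
    have h1 := h (c • x₁) (c • x₂) (c • x₃)
    simp only [hTA1, hTA2, hTA3, hf.map_smul, hTB1, hTB2, hTB3, smul_smul] at h1
    rw [← smul_sub, norm_smul, Real.norm_of_nonneg (by positivity),
        hrp, hrp, hrp] at h1
    have h2 : (c * (c * c)) * D ≤ θ * (c ^ (3 * p) * S) := by
      rw [hS]; exact le_of_le_of_eq h1 (by ring)
    have hcc : c * (c * c) = c ^ (3 : ℝ) := by
      rw [show (3 : ℝ) = ((3 : ℕ) : ℝ) by norm_num, Real.rpow_natCast]; ring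
    have hkey : c ^ (3 * p) = c ^ (3 : ℝ) * r ^ n := by
      rw [hc, hr, ← Real.rpow_natCast (((1:ℝ)/2) ^ (3 * p - 3)) n,
          ← Real.rpow_mul (by norm_num : (0:ℝ) ≤ 1/2),
          ← Real.rpow_mul (by norm_num : (0:ℝ) ≤ 1/2),
          ← Real.rpow_mul (by norm_num : (0:ℝ) ≤ 1/2),
          ← Real.rpow_add (by norm_num : (0:ℝ) < 1/2)]
      congr 1
      ring
    have hc3 : (0 : ℝ) < c ^ (3 : ℝ) := Real.rpow_pos_of_pos hc0 _
    rw [hcc, hkey] at h2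
    have := (mul_le_mul_iff_right₀ hc3).mp (by linarith [h2] : c ^ (3:ℝ) * D ≤ c ^ (3:ℝ) * (θ * S * r ^ n))
    exact this
  have htend : Filter.Tendsto (fun n : ℕ => θ * S * r ^ n) Filter.atTop (nhds 0) := by
    rw [show (0 : ℝ) = θ * S * 0 by ring]
    exact (tendsto_pow_atTop_nhds_zero_of_lt_one hr0 hr1).const_mul _
  have hD0 : D ≤ 0 := ge_of_tendsto' htend key
  have : f (TA x₁ x₂ x₃) - TB (f x₁) (f x₂) (f x₃) = 0 :=
    norm_le_zero_iff.mp hD0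
  exact sub_eq_zero.mp this
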